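/- Let (R,d) be a commutative k-algebra with a λ-derivation d. Define d̃ : R → R^ℕ by (d̃(a))(n) = d^{(n)}(a). Then d̃ is a homomorphism of k-algebras from R to the λ-Hurwitz series algebra R^ℕ, satisfying ε_R ∘ d̃ = id_R and δ_R ∘ d̃ = d̃^ℕ ∘ d̃. -/

import Mathlib

open Finset TensorProduct

/-- The `λ`-Hurwitz product over a `k`-module `M` with respect to a
multiplication `mul`. -/
def hmulG {k M : Type*} [CommRing k] [AddCommMonoid M] [Module k M]
    (lam : k) (mul : M → M → M) (f g : ℕ → M) : ℕ → M :=
  fun n => ∑ i ∈ range (n + 1), ∑ j ∈ range (n - i + 1),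
    (n.choose i * (n - i).choose j) • (lam ^ i • mul (f (n - j)) (g (i + j)))

/-- The `λ`-Hurwitz product on `A^ℕ` for a commutative `k`-algebra `A`. -/
def hmul {k A : Type*} [CommRing k] [CommRing A] [Algebra k A] (lam : k)
    (f g : ℕ → A) : ℕ → A :=
  hmulG lam (· * ·) f g

/-- The identity of the `λ`-Hurwitz series algebra. -/
def hone {A : Type*} [CommRing A] : ℕ → A := fun n => if n = 0 then 1 else 0

/-- The shift operator `∂_A`. -/
def hshift {A : Type*} (f : ℕ → A) : ℕ → A := fun n => f (n + 1)

/-- The comultiplication-type map `δ_A`. -/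
def hdel {M : Type*} (f : ℕ → M) : ℕ → ℕ → M := fun m n => f (m + n)

/-- For a `λ`-derivation `d` on `R`, the map `d̃ : R → R^ℕ`,
`(d̃ a) n = d^{(n)} a`, is an algebra homomorphism into the `λ`-Hurwitz
series algebra with `ε_R ∘ d̃ = id` and `δ_R ∘ d̃ = d̃^ℕ ∘ d̃`. -/

private theorem tri_comm {M : Type*} [AddCommMonoid M] (n : ℕ) (f : ℕ → ℕ → M) :
    ∑ m ∈ range (n + 1), ∑ i ∈ range (n - m + 1), f m i
      = ∑ i ∈ range (n + 1), ∑ m ∈ range (n - i + 1), f m i :=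
  Finset.sum_comm' (by intro x y; simp only [mem_range, Nat.lt_succ_iff]; omega)

theorem hurwitz_key {k R : Type*} [CommRing k] [CommRing R] [Algebra k R]
    (lam : k) (d : R →ₗ[k] R)
    (hd : ∀ x y : R, d (x * y) = d x * y + x * d y + lam • (d x * d y))
    (n : ℕ) (a b : R) :
    (d ^ n) (a * b) = ∑ i ∈ range (n + 1), ∑ j ∈ range (n - i + 1),
      (n.choose i * (n - i).choose j) •
        (lam ^ i • ((d ^ (n - j)) a * (d ^ (i + j)) b)) := by
  set θ : Module.End k R := 1 + lam • d with hθ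
  have hdθ : Commute (d : Module.End k R) θ :=
    (Commute.one_right _).add_right ((Commute.refl _).smul_right lam)
  set μ : R ⊗[k] R →ₗ[k] R := LinearMap.mul' k R with hμdef
  set X : Module.End k (R ⊗[k] R) := TensorProduct.map d 1 with hX
  set Y : Module.End k (R ⊗[k] R) := TensorProduct.map θ d with hY
  have hc : Commute X Y := by
    rw [Commute, SemiconjBy, hX, hY, ← TensorProduct.map_mul, ← TensorProduct.map_mul,
      hdθ.eq, one_mul, mul_one]
  have hstep : μ ∘ₗ (X + Y) = (d : Module.End k R) ∘ₗ μ := by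
    apply TensorProduct.ext'
    intro x y
    simp only [LinearMap.comp_apply, LinearMap.add_apply, hX, hY, TensorProduct.map_tmul,
      hμdef, LinearMap.mul'_apply, map_add, hθ, Module.End.one_apply,
      LinearMap.smul_apply, hd x y, add_mul, smul_mul_assoc]
    abel
  have hiter : ∀ m : ℕ, μ ∘ₗ (X + Y) ^ m = ((d : Module.End k R) ^ m) ∘ₗ μ := by
    intro m
    induction m with
    | zero => simp [Module.End.one_eq_id]
    | succ m ih =>
      rw [pow_succ, Module.End.mul_eq_comp, ← LinearMap.comp_assoc, ih,
        LinearMap.comp_assoc, hstep, ← LinearMap.comp_assoc, ← Module.End.mul_eq_comp,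
        ← pow_succ]
  have key1 : (d ^ n) (a * b) = μ (((X + Y) ^ n) (a ⊗ₜ[k] b)) := by
    have h := LinearMap.congr_fun (hiter n) (a ⊗ₜ[k] b)
    simp only [LinearMap.comp_apply, hμdef, LinearMap.mul'_apply] at h
    rw [h]
  have hθp : ∀ (p : ℕ) (x : R), (θ ^ p) x
      = ∑ i ∈ range (p + 1), p.choose i • (lam ^ i • (d ^ i) x) := by
    intro p x
    have h := (Commute.one_right (lam • (d : Module.End k R))).add_pow p
    have hθ' : θ = lam • d + 1 := by rw [hθ, add_comm]
    rw [hθ', h, LinearMap.sum_apply]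
    refine sum_congr rfl fun i _ => ?_
    rw [one_pow, mul_one, Module.End.mul_apply, Module.End.natCast_apply, smul_pow,
      LinearMap.smul_apply, map_nsmul, smul_comm]
  have hda : ∀ (m p : ℕ), (d ^ m) ((θ ^ p) a)
      = ∑ i ∈ range (p + 1), p.choose i • (lam ^ i • (d ^ (m + i)) a) := by
    intro m p
    rw [hθp, map_sum]
    refine sum_congr rfl fun i _ => ?_
    rw [map_nsmul, map_smul, ← Module.End.mul_apply, ← pow_add]
  rw [key1, hc.add_pow n, LinearMap.sum_apply, map_sum]
  have hterm : ∀ m ∈ range (n + 1),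
      μ ((X ^ m * Y ^ (n - m) * (n.choose m : Module.End k (R ⊗[k] R))) (a ⊗ₜ[k] b))
        = ∑ i ∈ range (n - m + 1), (n.choose m * (n - m).choose i) •
            (lam ^ i • ((d ^ (m + i)) a * (d ^ (n - m)) b)) := by
    intro m _
    rw [hX, hY, TensorProduct.map_pow, TensorProduct.map_pow, one_pow,
      ← TensorProduct.map_mul, Module.End.mul_apply, Module.End.natCast_apply,
      map_nsmul, TensorProduct.map_tmul, map_nsmul, one_mul, hμdef,
      LinearMap.mul'_apply, Module.End.mul_apply, hda, sum_mul, smul_sum]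
    refine sum_congr rfl fun i _ => ?_
    rw [smul_mul_assoc, smul_mul_assoc, smul_smul]
  rw [sum_congr rfl hterm, tri_comm]
  refine sum_congr rfl fun i hi => ?_
  rw [← Finset.sum_range_reflect]
  refine sum_congr rfl fun j hj => ?_
  simp only [mem_range, Nat.lt_succ_iff] at hi hj
  have h1 : n - i + 1 - 1 - j = n - i - j := by omega
  rw [h1]
  have h2 : n - i - j + i = n - j := by omega
  have h3 : n - (n - i - j) = i + j := by omega
  rw [h2, h3]
  congr 1
  have h4 : n.choose (n - i - j) = n.choose (i + j) := by
    rw [show n - i - j = n - (i + j) by omega, Nat.choose_symm (by omega)]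
  rw [h4]
  have := Nat.choose_mul (n := n) (k := i + j) (s := i) (by omega)
  rw [this, Nat.add_sub_cancel_left]

theorem hurwitz_hom_of_derivation {k R : Type*} [CommRing k] [CommRing R]
    [Algebra k R] (lam : k) (d : R →ₗ[k] R)
    (hd : ∀ x y : R, d (x * y) = d x * y + x * d y + lam • (d x * d y))
    (hd1 : d 1 = 0) :
    (∀ a b : R,
      (fun n => (⇑d)^[n] (a * b)) =
        hmul lam (fun n => (⇑d)^[n] a) (fun n => (⇑d)^[n] b)) ∧
    (∀ a b : R,
      (fun n => (⇑d)^[n] (a + b)) =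
        (fun n => (⇑d)^[n] a) + fun n => (⇑d)^[n] b) ∧
    (∀ (c : k) (a : R),
      (fun n => (⇑d)^[n] (c • a)) = c • fun n => (⇑d)^[n] a) ∧
    (fun n => (⇑d)^[n] (1 : R)) = hone ∧
    (∀ a : R, (⇑d)^[0] a = a) ∧
    (∀ a : R,
      hdel (fun n => (⇑d)^[n] a) = fun m n => (⇑d)^[n] ((⇑d)^[m] a)) := by
  refine ⟨?_, ?_, ?_, ?_, fun a => rfl, ?_⟩
  · intro a b
    funext n
    simp only [← Module.End.pow_apply, hmul, hmulG]
    exact hurwitz_key lam d hd n a b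
  · intro a b
    funext n
    simp [← Module.End.pow_apply, map_add]
  · intro c a
    funext n
    simp [← Module.End.pow_apply, map_smul]
  · funext n
    cases n with
    | zero => simp [hone]
    | succ m =>
      rw [Function.iterate_succ_apply, hd1]
      simp [← Module.End.pow_apply, hone]
  · intro a
    funext m n
    rw [hdel, Nat.add_comm, Function.iterate_add_apply]
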